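/- For real μ > 0, β > 0, and δ ∈ ℝ, the integral ∫₀^∞ x^{μ−1} e^{−βx} cos(δx) dx equals Γ(μ) cos(μ arctan(δ/β)) / (β² + δ²)^{μ/2}. -/

import Mathlib

open MeasureTheory Set Complex Filter

lemma auxInt (s c : ℝ) (hs : 0 < s) (hc : 0 < c) :
    IntegrableOn (fun t : ℝ => t ^ (s - 1) * Real.exp (-(c * t))) (Ioi 0) := by
  have h := integrableOn_rpow_mul_exp_neg_mul_rpow (by linarith : (-1:ℝ) < s - 1) (zero_lt_one : (0:ℝ) < 1) hc
  simpa [Real.rpow_one, neg_mul] using h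

lemma auxContPow (w : ℂ) : ContinuousOn (fun t : ℝ => (t:ℂ) ^ w) (Ioi 0) := by
  intro x hx
  exact ((continuousAt_cpow_const (ofReal_mem_slitPlane.2 hx)).comp
    continuous_ofReal.continuousAt).continuousWithinAt

lemma auxContExp (z : ℂ) : Continuous (fun t : ℝ => Complex.exp (-(z * t))) :=
  Complex.continuous_exp.comp ((continuous_const.mul continuous_ofReal).neg)

lemma auxCont (w z : ℂ) :
    ContinuousOn (fun t : ℝ => (t:ℂ) ^ w * Complex.exp (-(z * t))) (Ioi 0) :=
  (auxContPow w).mul (auxContExp z).continuousOn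

lemma auxCInt (μ : ℝ) (hμ : 0 < μ) (z : ℂ) (hz : 0 < z.re) :
    IntegrableOn (fun t : ℝ => (t:ℂ) ^ ((μ:ℂ) - 1) * Complex.exp (-(z * t))) (Ioi 0) := by
  apply Integrable.mono' (auxInt μ z.re hμ hz)
  · exact (auxCont _ z).aestronglyMeasurable measurableSet_Ioi
  · refine (ae_restrict_iff' measurableSet_Ioi).mpr (Filter.Eventually.of_forall fun t ht => ?_)
    rw [norm_mul,
      Complex.norm_cpow_eq_rpow_re_of_pos ht, Complex.norm_exp]
    simp only [sub_re, ofReal_re, one_re, neg_re, mul_re, ofReal_im, mul_zero, sub_zero]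
    exact le_of_eq rfl

lemma keyGamma (μ : ℝ) (hμ : 0 < μ) (z : ℂ) (hz : 0 < z.re) :
    ∫ t in Ioi (0:ℝ), (t:ℂ) ^ ((μ:ℂ) - 1) * Complex.exp (-(z * t))
      = Complex.Gamma μ * z ^ (-(μ:ℂ)) := by
  set F : ℂ → ℂ := fun w => ∫ t in Ioi (0:ℝ), (t:ℂ) ^ ((μ:ℂ) - 1) * Complex.exp (-(w * t))
    with hFdef
  set G : ℂ → ℂ := fun w => Complex.Gamma μ * w ^ (-(μ:ℂ)) with hGdef
  set U : Set ℂ := {w : ℂ | 0 < w.re} with hUdef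
  have hUo : IsOpen U := isOpen_lt continuous_const Complex.continuous_re
  have hUconv : Convex ℝ U := convex_halfSpace_re_gt 0
  -- F differentiable on U
  have hFdiff : DifferentiableOn ℂ F U := by
    intro z₀ hz₀
    have hre : 0 < z₀.re := hz₀
    set ε : ℝ := z₀.re / 2 with hε
    have hεpos : 0 < ε := by positivity
    have key := hasDerivAt_integral_of_dominated_loc_of_deriv_le (μ := volume.restrict (Ioi 0))
      (F := fun (w : ℂ) (t : ℝ) => (t:ℂ) ^ ((μ:ℂ) - 1) * Complex.exp (-(w * t)))
      (F' := fun (w : ℂ) (t : ℝ) =>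
        (t:ℂ) ^ ((μ:ℂ) - 1) * (Complex.exp (-(w * t)) * -(t:ℂ)))
      (x₀ := z₀) (bound := fun t => t ^ ((μ + 1) - 1) * Real.exp (-(ε * t))) (Metric.ball_mem_nhds z₀ hεpos)
      (Filter.Eventually.of_forall fun w =>
        (auxCont _ w).aestronglyMeasurable measurableSet_Ioi)
      (auxCInt μ hμ z₀ hre)
      ?meas' ?bound ((auxInt (μ+1) ε (by linarith) hεpos)) ?diff
    · exact key.2.differentiableAt.differentiableWithinAt
    case meas' =>
      refine ContinuousOn.aestronglyMeasurable ?_ measurableSet_Ioi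
      exact (auxContPow _).mul
        ((auxContExp z₀).continuousOn.mul continuous_ofReal.neg.continuousOn)
    case bound =>
      refine (ae_restrict_iff' measurableSet_Ioi).mpr (Filter.Eventually.of_forall fun t ht => ?_)
      intro w hw
      have hwre : ε ≤ w.re := by
        have h1 : |w.re - z₀.re| ≤ ‖w - z₀‖ := by
          simpa using Complex.abs_re_le_norm (w - z₀)
        have h2 : ‖w - z₀‖ < ε := by
          simpa [Metric.mem_ball, Complex.dist_eq] using hw
        have := abs_sub_lt_iff.mp (lt_of_le_of_lt h1 h2)
        simp only [hε] at *
        linarith [this.2]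
      have ht0 : (0:ℝ) < t := ht
      rw [norm_mul, norm_mul, norm_neg,
        Complex.norm_cpow_eq_rpow_re_of_pos ht0, Complex.norm_exp,
        Complex.norm_real, Real.norm_eq_abs, abs_of_pos ht0]
      simp only [sub_re, ofReal_re, one_re, neg_re, mul_re, ofReal_im, mul_zero, sub_zero]
      have h1 : t ^ (μ - 1) * (Real.exp (-(w.re * t)) * t)
          = t ^ ((μ + 1) - 1) * Real.exp (-(w.re * t)) := by
        rw [show (μ + 1) - 1 = (μ - 1) + 1 by ring, Real.rpow_add_one ht0.ne']
        ring
      rw [h1]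
      have hexp : Real.exp (-(w.re * t)) ≤ Real.exp (-(ε * t)) :=
        Real.exp_le_exp.mpr (by nlinarith)
      have hpow : (0:ℝ) ≤ t ^ ((μ + 1) - 1) := Real.rpow_nonneg ht0.le _
      exact mul_le_mul_of_nonneg_left hexp hpow
    case diff =>
      refine (ae_restrict_iff' measurableSet_Ioi).mpr (Filter.Eventually.of_forall fun t ht => ?_)
      intro w hw
      have h : HasDerivAt (fun w : ℂ => -(w * t)) (-(t:ℂ)) w := by
        exact ((hasDerivAt_id' w).mul_const (t:ℂ)).neg.congr_deriv (by simp)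
      exact (h.cexp).const_mul _
  -- G differentiable on U
  have hGdiff : DifferentiableOn ℂ G U := by
    intro w hw
    have hslit : w ∈ Complex.slitPlane := Or.inl hw
    exact ((differentiableAt_id.cpow (differentiableAt_const _) hslit).const_mul
      _).differentiableWithinAt
  -- equality on positive reals
  have hreal : ∀ r : ℝ, 0 < r → F r = G r := by
    intro r hr
    have := integral_cpow_mul_exp_neg_mul_Ioi
      (a := (μ:ℂ)) (r := r) (by simpa using hμ) hr
    have harg : Complex.arg (r:ℂ) ≠ Real.pi := by
      rw [Complex.arg_ofReal_of_nonneg hr.le]; exact Real.pi_ne_zero.symm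
    rw [hFdef]
    simp only
    rw [this, hGdef]
    simp only
    rw [one_div, Complex.inv_cpow _ _ harg, ← Complex.cpow_neg, mul_comm]
  -- identity principle
  have hEq : EqOn F G U := by
    refine (hFdiff.analyticOnNhd hUo).eqOn_of_preconnected_of_frequently_eq
      (hGdiff.analyticOnNhd hUo) hUconv.isPreconnected (by norm_num [hUdef] : (1:ℂ) ∈ U) ?_
    have htend : Tendsto (fun n : ℕ => ((1 + 1 / (n + 1) : ℝ) : ℂ)) atTop (nhdsWithin 1 {(1:ℂ)}ᶜ) := by
      rw [tendsto_nhdsWithin_iff]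
      constructor
      · have : Tendsto (fun n : ℕ => (1 + 1 / (n + 1) : ℝ)) atTop (nhds 1) := by
          simpa using (tendsto_const_nhds (x := (1:ℝ))).add (tendsto_one_div_add_atTop_nhds_zero_nat)
        have h2 : Tendsto (fun n : ℕ => ((1 + 1 / (n + 1) : ℝ) : ℂ)) atTop
            (nhds ((1:ℝ):ℂ)) := (Complex.continuous_ofReal.tendsto _).comp this
        simpa using h2
      · refine Filter.Eventually.of_forall fun n => ?_
        simp only [mem_compl_iff, mem_singleton_iff]
        intro hcon
        have : (1 + 1 / (n + 1) : ℝ) = 1 := by exact_mod_cast hcon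
        have hn : (0:ℝ) < 1 / (n + 1) := by positivity
        linarith
    refine htend.frequently (Filter.Eventually.of_forall (fun n => ?_)).frequently
    exact hreal _ (by positivity)
  exact hEq hz

theorem stmt2 (μ β δ : ℝ) (hμ : 0 < μ) (hβ : 0 < β) :
    ∫ x in Set.Ioi (0 : ℝ), x ^ (μ - 1) * Real.exp (-β * x) * Real.cos (δ * x)
      = Real.Gamma μ * Real.cos (μ * Real.arctan (δ / β)) /
          (β ^ 2 + δ ^ 2) ^ (μ / 2) := by
  set z : ℂ := (β : ℂ) + (δ : ℂ) * I with hzdef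
  have hzre : z.re = β := by simp [hzdef]
  have hzim : z.im = δ := by simp [hzdef]
  have hzre' : 0 < z.re := by rw [hzre]; exact hβ
  have hz0 : z ≠ 0 := by
    intro h; rw [h] at hzre; simp at hzre; linarith
  -- step 1: real integral = re of complex integral
  have h1 : ∫ x in Set.Ioi (0 : ℝ), x ^ (μ - 1) * Real.exp (-β * x) * Real.cos (δ * x)
      = (∫ t in Ioi (0:ℝ), (t:ℂ) ^ ((μ:ℂ) - 1) * Complex.exp (-(z * t))).re := by
    have hint := integral_re (μ := volume.restrict (Ioi 0)) (auxCInt μ hμ z hzre')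
    simp only [RCLike.re_to_complex] at hint
    rw [← hint]
    refine setIntegral_congr_fun measurableSet_Ioi (fun x hx => ?_)
    have hx0 : (0:ℝ) < x := hx
    have hc : ((x:ℂ)) ^ ((μ:ℂ) - 1) = ((x ^ (μ - 1) : ℝ) : ℂ) := by
      rw [Complex.ofReal_cpow hx0.le]; push_cast; ring_nf
    rw [hc]
    have hre : (-(z * (x:ℂ))).re = -(β * x) := by
      simp [Complex.mul_re, hzre, hzim]
    have him : (-(z * (x:ℂ))).im = -(δ * x) := by
      simp [Complex.mul_im, hzre, hzim]
    rw [Complex.mul_re, Complex.ofReal_re, Complex.ofReal_im, zero_mul, sub_zero,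
      Complex.exp_re, hre, him, Real.cos_neg]
    rw [neg_mul]
    ring
  rw [h1, keyGamma μ hμ z hzre']
  -- step 2: compute real part
  have hA : ‖z‖ = Real.sqrt (β ^ 2 + δ ^ 2) := by
    rw [hzdef, Complex.norm_add_mul_I]
  have hApos : 0 < ‖z‖ := norm_pos_iff.mpr hz0
  have harg : Complex.arg z = Real.arctan (δ / β) := by
    have habs : |Complex.arg z| < Real.pi / 2 :=
      Complex.abs_arg_lt_pi_div_two_iff.mpr (Or.inl hzre')
    have h2 := abs_lt.mp habs
    have h3 := Real.arctan_tan (by linarith : -(Real.pi/2) < Complex.arg z) h2.2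
    rw [Complex.tan_arg, hzim, hzre] at h3
    exact h3.symm
  have hcpow : z ^ (-(μ:ℂ)) = Complex.exp (Complex.log z * (-(μ:ℂ))) :=
    Complex.cpow_def_of_ne_zero hz0 _
  have hre2 : (Complex.log z * (-(μ:ℂ))).re = Real.log ‖z‖ * (-μ) := by
    simp [Complex.mul_re, Complex.log_re, Complex.log_im]
  have him2 : (Complex.log z * (-(μ:ℂ))).im = -(Complex.arg z * μ) := by
    simp [Complex.mul_im, Complex.log_re, Complex.log_im]
  rw [Complex.mul_re, Complex.Gamma_ofReal, Complex.ofReal_re, Complex.ofReal_im, zero_mul,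
    sub_zero, hcpow, Complex.exp_re, hre2, him2, Real.cos_neg,
    ← Real.rpow_def_of_pos hApos, hA, harg]
  have hs : (0:ℝ) < β ^ 2 + δ ^ 2 := by positivity
  rw [Real.sqrt_eq_rpow, ← Real.rpow_mul hs.le,
    show (1/2) * (-μ) = -(μ/2) by ring, Real.rpow_neg hs.le,
    mul_comm (Real.arctan (δ / β)) μ]
  ring
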